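/- Let τ > 0, μ ∈ ℝ, i ∈ {1,2}, and define v(s) = (2/√τ)·( (−2μ/√τ)·(1 − cos(√τ·s)) + (−1)^i·sin(√τ·s) ). Then there exists a unique s_i ∈ (0, 2π/√τ) such that v(s_i) = 0 and (−1)^i·v(s) > 0 for all s ∈ (0, s_i). -/

import Mathlib

open Real

theorem stmt_2 (τ μ : ℝ) (hτ : 0 < τ) (i : ℕ) (hi : i = 1 ∨ i = 2) (v : ℝ → ℝ)
    (hv : ∀ s : ℝ, v s = (2 / Real.sqrt τ) *
      ((-2 * μ / Real.sqrt τ) * (1 - Real.cos (Real.sqrt τ * s))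
        + (-1 : ℝ) ^ i * Real.sin (Real.sqrt τ * s))) :
    ∃! si : ℝ, si ∈ Set.Ioo 0 (2 * π / Real.sqrt τ) ∧ v si = 0 ∧
      ∀ s ∈ Set.Ioo 0 si, 0 < (-1 : ℝ) ^ i * v s := by
  have hr : 0 < Real.sqrt τ := Real.sqrt_pos.mpr hτ
  set r := Real.sqrt τ with hrdef
  set ε : ℝ := (-1 : ℝ) ^ i with hε
  have hε2 : ε * ε = 1 := by rcases hi with h | h <;> simp [hε, h]
  set a : ℝ := ε * (-2 * μ / r) with ha
  set φ := Real.arctan a with hφ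
  have hφ1 : -(π / 2) < φ := Real.neg_pi_div_two_lt_arctan a
  have hφ2 : φ < π / 2 := Real.arctan_lt_pi_div_two a
  have hA : 0 < Real.sqrt (1 + a ^ 2) := Real.sqrt_pos.mpr (by positivity)
  have hC : Real.cos φ = 1 / Real.sqrt (1 + a ^ 2) := Real.cos_arctan a
  have hS : Real.sin φ = a / Real.sqrt (1 + a ^ 2) := Real.sin_arctan a
  have hπ := Real.pi_pos
  have key : ∀ s : ℝ, ε * v s =
      (4 / r) * Real.sin (r * s / 2) *
        (Real.sqrt (1 + a ^ 2) * Real.cos (r * s / 2 - φ)) := by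
    intro s
    have h1 : Real.sqrt (1 + a ^ 2) * Real.cos (r * s / 2 - φ)
        = a * Real.sin (r * s / 2) + Real.cos (r * s / 2) := by
      rw [Real.cos_sub, hC, hS]
      field_simp
      ring
    have hcosEq : Real.cos (r * s) = 2 * Real.cos (r * s / 2) ^ 2 - 1 := by
      have h := Real.cos_two_mul (r * s / 2)
      rw [show 2 * (r * s / 2) = r * s by ring] at h
      exact h
    have hsinEq : Real.sin (r * s) = 2 * Real.sin (r * s / 2) * Real.cos (r * s / 2) := by
      have h := Real.sin_two_mul (r * s / 2)
      rw [show 2 * (r * s / 2) = r * s by ring] at h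
      exact h
    have hsc := Real.sin_sq_add_cos_sq (r * s / 2)
    have hma : -2 * μ / r = ε * a := by
      rw [ha, ← mul_assoc, hε2, one_mul]
    rw [h1, hv s, hcosEq, hsinEq, hma]
    linear_combination
      (2 / r * (a * (1 - (2 * Real.cos (r * s / 2) ^ 2 - 1))
        + (2 * Real.sin (r * s / 2) * Real.cos (r * s / 2)))) * hε2
      - (4 * a / r) * hsc
  have hev : ε = 1 ∨ ε = -1 := by
    rcases hi with h | h <;> simp [hε, h]
  set si : ℝ := (π / 2 + φ) * 2 / r with hsi
  have hx0 : r * si / 2 = π / 2 + φ := by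
    rw [hsi]; field_simp
  have hsi_pos : 0 < si := by
    apply div_pos _ hr; nlinarith
  have hsi_lt : si < 2 * π / r := by
    rw [hsi, div_lt_div_iff₀ hr hr]; nlinarith
  refine ⟨si, ⟨⟨hsi_pos, hsi_lt⟩, ?_, ?_⟩, ?_⟩
  · -- v si = 0
    have h0 : ε * v si = 0 := by
      rw [key si, hx0]
      have h2 : π / 2 + φ - φ = π / 2 := by ring
      rw [h2, Real.cos_pi_div_two]
      ring
    rcases hev with h | h <;> rw [h] at h0 <;> linarith
  · -- positivity on (0, si)
    intro s hs
    rw [key s]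
    have hx : 0 < r * s / 2 := by
      have := hs.1; positivity
    have hx2 : r * s / 2 < π / 2 + φ := by
      rw [← hx0]
      have : r * s < r * si := by nlinarith [hs.2]
      linarith
    have hsin : 0 < Real.sin (r * s / 2) :=
      Real.sin_pos_of_pos_of_lt_pi hx (by linarith)
    have hcos : 0 < Real.cos (r * s / 2 - φ) := by
      apply Real.cos_pos_of_mem_Ioo
      constructor <;> linarith
    positivity
  · -- uniqueness
    rintro s' ⟨⟨hs0, hs1⟩, hz, -⟩
    have hx : 0 < r * s' / 2 := by positivity
    have hx2 : r * s' / 2 < π := by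
      have h1 : r * s' < r * (2 * π / r) := by nlinarith
      have h2 : r * (2 * π / r) = 2 * π := by field_simp
      linarith
    have h0 : ε * v s' = 0 := by rw [hz]; ring
    rw [key s'] at h0
    have hsin : 0 < Real.sin (r * s' / 2) :=
      Real.sin_pos_of_pos_of_lt_pi hx hx2
    have hcos : Real.cos (r * s' / 2 - φ) = 0 := by
      by_contra hne
      have h4 : (4 : ℝ) / r ≠ 0 := by positivity
      exact (mul_ne_zero (mul_ne_zero h4 (ne_of_gt hsin))
        (mul_ne_zero (ne_of_gt hA) hne)) h0
    rw [Real.cos_eq_zero_iff] at hcos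
    obtain ⟨k, hk⟩ := hcos
    have hb1 : -(π / 2) < (2 * (k : ℝ) + 1) * π / 2 := by
      rw [← hk]; linarith
    have hb2 : (2 * (k : ℝ) + 1) * π / 2 < 3 * π / 2 := by
      rw [← hk]; linarith
    have hk1 : (-1 : ℝ) < 2 * (k : ℝ) + 1 := by
      have h := hb1
      rw [show -(π / 2) = (-1 : ℝ) * (π / 2) by ring,
        show (2 * (k : ℝ) + 1) * π / 2 = (2 * (k : ℝ) + 1) * (π / 2) by ring] at h
      exact (mul_lt_mul_iff_of_pos_right (half_pos hπ)).mp h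
    have hk2 : (2 * (k : ℝ) + 1) < 3 := by
      have h := hb2
      rw [show (3 : ℝ) * π / 2 = (3 : ℝ) * (π / 2) by ring,
        show (2 * (k : ℝ) + 1) * π / 2 = (2 * (k : ℝ) + 1) * (π / 2) by ring] at h
      exact (mul_lt_mul_iff_of_pos_right (half_pos hπ)).mp h
    have hk0 : k = 0 := by
      have h1 : (-1 : ℤ) < 2 * k + 1 := by exact_mod_cast hk1
      have h2 : 2 * k + 1 < (3 : ℤ) := by exact_mod_cast hk2
      omega
    rw [hk0] at hk
    simp only [Int.cast_zero] at hk
    have hfin : r * s' / 2 - φ = π / 2 := by rw [hk]; ring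
    rw [hsi, eq_div_iff (ne_of_gt hr)]
    linear_combination 2 * hfin
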